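/- The range of the row operator M_z : H_m(𝔹)ⁿ → H_m(𝔹) is closed and equals {f ∈ H_m(𝔹) : f(0) = 0}. -/

import Mathlib

open scoped InnerProductSpace

set_option synthInstance.maxHeartbeats 400000
set_option maxHeartbeats 800000

instance piLp_completeSpace {H : Type*} [NormedAddCommGroup H] [InnerProductSpace ℂ H]
    [CompleteSpace H] {n : ℕ} : CompleteSpace (PiLp 2 (fun _ : Fin n => H)) := by
  have e := (PiLp.continuousLinearEquiv 2 ℂ (fun _ : Fin n => H)).symm
  exact (e.isUniformEmbedding.isUniformInducing.completeSpace_congr e.surjective).mp inferInstance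

/-- The weight `ρ_m(α) = (m+|α|-1)!/(α!(m-1)!)`. -/
noncomputable def rhoR (m : ℕ) {n : ℕ} (α : Fin n → ℕ) : ℝ :=
  ((m + (∑ i, α i) - 1).factorial : ℝ) /
    ((∏ i, ((α i).factorial : ℝ)) * ((m - 1).factorial : ℝ))

lemma rhoR_pos (m : ℕ) {n : ℕ} (α : Fin n → ℕ) : 0 < rhoR m α := by
  unfold rhoR
  apply div_pos
  · exact_mod_cast (m + (∑ i, α i) - 1).factorial_pos
  · exact mul_pos (Finset.prod_pos fun i _ => by exact_mod_cast (α i).factorial_pos)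
      (by exact_mod_cast (m - 1).factorial_pos)

lemma rhoR_zero (m : ℕ) {n : ℕ} : rhoR m (0 : Fin n → ℕ) = 1 := by
  have h : ((m - 1).factorial : ℝ) ≠ 0 := by
    exact_mod_cast (m - 1).factorial_pos.ne'
  simp [rhoR, div_self h]

lemma sum_sub_single {n : ℕ} (α : Fin n → ℕ) (i : Fin n) (hi : 1 ≤ α i) :
    ∑ j, (α - Pi.single i 1 : Fin n → ℕ) j = (∑ j, α j) - 1 := by
  classical
  rw [← Finset.add_sum_erase Finset.univ _ (Finset.mem_univ i),
      ← Finset.add_sum_erase Finset.univ α (Finset.mem_univ i)]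
  have h1 : ∀ j ∈ Finset.univ.erase i, (α - Pi.single i 1 : Fin n → ℕ) j = α j := by
    intro j hj
    have : j ≠ i := Finset.ne_of_mem_erase hj
    simp [Pi.sub_apply, Pi.single_eq_of_ne this]
  have h2 : ∑ j ∈ Finset.univ.erase i, (α - Pi.single i 1 : Fin n → ℕ) j
      = ∑ j ∈ Finset.univ.erase i, α j := Finset.sum_congr rfl h1
  have h3 : (α - Pi.single i 1 : Fin n → ℕ) i = α i - 1 := by simp [Pi.sub_apply]
  rw [h2, h3]
  omega

lemma prod_fact_sub_single {n : ℕ} (α : Fin n → ℕ) (i : Fin n) :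
    (∏ j, (((α - Pi.single i 1 : Fin n → ℕ) j).factorial : ℝ)) =
      ((α i - 1).factorial : ℝ) * ∏ j ∈ Finset.univ.erase i, ((α j).factorial : ℝ) := by
  classical
  rw [← Finset.mul_prod_erase Finset.univ _ (Finset.mem_univ i)]
  congr 1
  · simp [Pi.sub_apply]
  · apply Finset.prod_congr rfl
    intro j hj
    have : j ≠ i := Finset.ne_of_mem_erase hj
    simp [Pi.sub_apply, Pi.single_eq_of_ne this]

lemma rhoR_key (m : ℕ) (hm : 1 ≤ m) {n : ℕ} (α : Fin n → ℕ) (i : Fin n) (hi : 1 ≤ α i) :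
    ((m + (∑ j, α j) - 1 : ℕ) : ℝ) * rhoR m (α - Pi.single i 1) = (α i : ℝ) * rhoR m α := by
  classical
  obtain ⟨μ, rfl⟩ : ∃ μ, m = μ + 1 := ⟨m - 1, by omega⟩
  obtain ⟨a, ha⟩ : ∃ a, α i = a + 1 := ⟨α i - 1, by omega⟩
  set t := ∑ j ∈ Finset.univ.erase i, α j with ht
  have hs : ∑ j, α j = a + 1 + t := by
    rw [← Finset.add_sum_erase Finset.univ α (Finset.mem_univ i), ha]
  have hs' : ∑ j, (α - Pi.single i 1 : Fin n → ℕ) j = a + t := by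
    rw [sum_sub_single α i hi, hs]; omega
  unfold rhoR
  rw [hs, hs', prod_fact_sub_single,
      ← Finset.mul_prod_erase Finset.univ (fun j => ((α j).factorial : ℝ)) (Finset.mem_univ i)]
  have e1 : μ + 1 + (a + 1 + t) - 1 = (μ + a + t) + 1 := by omega
  have e2 : μ + 1 + (a + t) - 1 = μ + a + t := by omega
  have e3 : μ + 1 - 1 = μ := by omega
  rw [e1, e2, e3, ha]
  have hQ : 0 < ∏ j ∈ Finset.univ.erase i, ((α j).factorial : ℝ) :=
    Finset.prod_pos fun j _ => by exact_mod_cast (α j).factorial_pos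
  have hfa : (0:ℝ) < (a.factorial : ℝ) := by exact_mod_cast a.factorial_pos
  have hfμ : (0:ℝ) < (μ.factorial : ℝ) := by exact_mod_cast μ.factorial_pos
  simp only [Nat.factorial_succ, Nat.cast_mul, Nat.cast_add, Nat.cast_one, ha, Nat.add_sub_cancel]
  field_simp

lemma norm_sq_sum_orthogonal {H : Type*} [NormedAddCommGroup H] [InnerProductSpace ℂ H]
    {τ : Type*} (t : Finset τ) (v : τ → H)
    (h : ∀ x ∈ t, ∀ y ∈ t, x ≠ y → ⟪v x, v y⟫_ℂ = 0) :
    ‖∑ x ∈ t, v x‖ ^ 2 = ∑ x ∈ t, ‖v x‖ ^ 2 := by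
  classical
  have h1 : ⟪∑ x ∈ t, v x, ∑ x ∈ t, v x⟫_ℂ = ∑ x ∈ t, ⟪v x, v x⟫_ℂ := by
    rw [sum_inner]
    refine Finset.sum_congr rfl fun x hx => ?_
    rw [inner_sum]
    exact Finset.sum_eq_single_of_mem x hx fun y hy hyx => h x hx y hy (Ne.symm hyx)
  rw [← inner_self_eq_norm_sq (𝕜 := ℂ), h1, map_sum]
  exact Finset.sum_congr rfl fun x _ => inner_self_eq_norm_sq (𝕜 := ℂ) _

lemma sep_of_dense {H : Type*} [NormedAddCommGroup H] [InnerProductSpace ℂ H]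
    {ι : Type*} (e : ι → H)
    (hdense : Dense ((Submodule.span ℂ (Set.range e) : Submodule ℂ H) : Set H))
    (x y : H) (hxy : ∀ β, ⟪e β, x⟫_ℂ = ⟪e β, y⟫_ℂ) : x = y := by
  have key : ∀ z ∈ (Submodule.span ℂ (Set.range e) : Submodule ℂ H), ⟪z, x - y⟫_ℂ = 0 := by
    intro z hz
    induction hz using Submodule.span_induction with
    | mem w hw => obtain ⟨β, rfl⟩ := hw; rw [inner_sub_right, hxy β, sub_self]
    | zero => simp
    | add a b _ _ ha hb => rw [inner_add_left, ha, hb, add_zero]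
    | smul c a _ ha => rw [inner_smul_left, ha, mul_zero]
  have hcl : IsClosed {z : H | ⟪z, x - y⟫_ℂ = 0} :=
    isClosed_eq (continuous_id.inner continuous_const) continuous_const
  have hall : ∀ z : H, ⟪z, x - y⟫_ℂ = 0 := by
    intro z
    have hz : z ∈ closure ((Submodule.span ℂ (Set.range e) : Submodule ℂ H) : Set H) := by
      rw [hdense.closure_eq]; trivial
    exact (closure_minimal key hcl) hz
  have h0 := hall (x - y)
  rwa [inner_self_eq_zero, sub_eq_zero] at h0

/-- On `H_m(𝔹)` — modelled abstractly as a Hilbert space `H` with an orthogonal family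
`e α` of monomials satisfying `⟪e α, e β⟫ = δ_{αβ}/ρ_m(α)` and having dense span — the range
of the row operator `M_z : H_m(𝔹)ⁿ → H_m(𝔹)`, `(f_i) ↦ ∑ z_i f_i`, is closed and equals
`{f ∈ H_m(𝔹) : f(0) = 0}`; here `f(0) = ⟪e 0, f⟫` since `e 0 = 1` is the reproducing
kernel at the origin. -/
theorem row_op_closed_range (n m : ℕ) (hm : 1 ≤ m)
    {H : Type*} [NormedAddCommGroup H] [InnerProductSpace ℂ H] [CompleteSpace H]
    (e : (Fin n → ℕ) → H)
    (horth : ∀ α β, ⟪e α, e β⟫_ℂ = if α = β then ((rhoR m α)⁻¹ : ℂ) else 0)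
    (hdense : Dense ((Submodule.span ℂ (Set.range e) : Submodule ℂ H) : Set H))
    (Mz : Fin n → H →L[ℂ] H)
    (hMz : ∀ i α, Mz i (e α) = e (α + Pi.single i 1))
    (Mrow : PiLp 2 (fun _ : Fin n => H) →L[ℂ] H)
    (hMrow : ∀ f, Mrow f = ∑ i, Mz i (f i)) :
    IsClosed (Set.range Mrow) ∧
      Set.range Mrow = {f : H | ⟪e (0 : Fin n → ℕ), f⟫_ℂ = 0} := by
  classical
  have hsep : ∀ x y : H, (∀ β, ⟪e β, x⟫_ℂ = ⟪e β, y⟫_ℂ) → x = y := sep_of_dense e hdense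
  set N : (Fin n → ℕ) → ℕ := fun α => m + (∑ j, α j) - 1 with hN
  have hNpos : ∀ α : Fin n → ℕ, 1 ≤ ∑ j, α j → 0 < N α := fun α h => by
    show 0 < m + (∑ j, α j) - 1
    generalize hs : (∑ j, α j) = s at h ⊢
    omega
  set cf : (Fin n → ℕ) → Fin n → ℝ := fun α i => (α i : ℝ) / (N α : ℝ) with hcf
  set A : Fin n → (H →L[ℂ] H) := fun i => ContinuousLinearMap.adjoint (Mz i) with hA
  have hnorme : ∀ β, ‖e β‖ ^ 2 = (rhoR m β)⁻¹ := by
    intro β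
    rw [← inner_self_eq_norm_sq (𝕜 := ℂ), horth β β, if_pos rfl]
    simp
  -- key adjoint formula
  have hAe : ∀ i α, A i (e α) = ((cf α i : ℝ) : ℂ) • e (α - Pi.single i 1) := by
    intro i α
    apply hsep
    intro β
    have hL : ⟪e β, A i (e α)⟫_ℂ = ⟪e (β + Pi.single i 1), e α⟫_ℂ := by
      rw [show A i = ContinuousLinearMap.adjoint (Mz i) from rfl,
          ContinuousLinearMap.adjoint_inner_right, hMz]
    rw [hL, inner_smul_right, horth, horth]
    by_cases hzi : α i = 0
    · have hcf0 : cf α i = 0 := by simp [hcf, hzi]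
      have hne : ¬ (β + Pi.single i 1 = α) := by
        intro h
        have h2 := congrFun h i
        simp only [Pi.add_apply, Pi.single_eq_same] at h2
        omega
      rw [if_neg hne, hcf0]
      simp
    · have hi : 1 ≤ α i := Nat.one_le_iff_ne_zero.mpr hzi
      have hiff : β + Pi.single i 1 = α ↔ β = α - Pi.single i 1 := by
        constructor
        · rintro rfl
          funext j
          by_cases hj : j = i
          · subst hj; simp [Pi.add_apply, Pi.single_eq_same]
          · simp [Pi.add_apply, Pi.single_eq_of_ne hj]
        · rintro rfl
          funext j
          by_cases hj : j = i
          · subst hj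
            simp only [Pi.add_apply, Pi.single_eq_same, Pi.sub_apply]
            omega
          · simp [Pi.add_apply, Pi.single_eq_of_ne hj, Pi.sub_apply]
      by_cases heq : β = α - Pi.single i 1
      · subst heq
        have hba : α - Pi.single i 1 + Pi.single i 1 = α := hiff.mpr rfl
        rw [if_pos hba, if_pos rfl, hba]
        have hkey : (N α : ℝ) * rhoR m (α - Pi.single i 1) = (α i : ℝ) * rhoR m α :=
          rhoR_key m hm α i hi
        have hsum1 : 1 ≤ ∑ j, α j :=
          le_trans hi (Finset.single_le_sum (fun j _ => Nat.zero_le _) (Finset.mem_univ i))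
        have hNne : ((N α : ℝ)) ≠ 0 := by exact_mod_cast (hNpos α hsum1).ne'
        have hρ : rhoR m α ≠ 0 := (rhoR_pos m α).ne'
        have hρ' : rhoR m (α - Pi.single i 1) ≠ 0 := (rhoR_pos m _).ne'
        have hαi : (α i : ℝ) ≠ 0 := by exact_mod_cast hzi
        have hreal : (rhoR m α)⁻¹ = cf α i * (rhoR m (α - Pi.single i 1))⁻¹ := by
          rw [hcf]
          field_simp
          linear_combination hkey
        exact_mod_cast congrArg Complex.ofReal hreal
      · rw [if_neg (fun h => heq (hiff.mp h)), if_neg heq, mul_zero]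
  -- the row adjoint
  set Arow : H →L[ℂ] PiLp 2 (fun _ : Fin n => H) :=
    (PiLp.continuousLinearEquiv 2 ℂ (fun _ : Fin n => H)).symm.toContinuousLinearMap.comp
      (ContinuousLinearMap.pi fun i => A i) with hArowdef
  have hArow_apply : ∀ (g : H) (i : Fin n), Arow g i = A i g := fun g i => rfl
  have hArow_norm : ∀ g : H, ‖Arow g‖ ^ 2 = ∑ i, ‖A i g‖ ^ 2 := by
    intro g
    rw [PiLp.norm_sq_eq_of_L2]
    exact Finset.sum_congr rfl fun i _ => by rw [hArow_apply]
  have hadj : ∀ (g : H) (f : PiLp 2 (fun _ : Fin n => H)), ⟪Arow g, f⟫_ℂ = ⟪g, Mrow f⟫_ℂ := by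
    intro g f
    rw [PiLp.inner_apply, hMrow, inner_sum]
    exact Finset.sum_congr rfl fun i _ =>
      ContinuousLinearMap.adjoint_inner_left (Mz i) (f i) g
  have hArow_e0 : Arow (e 0) = 0 := by
    have : ∀ i, Arow (e 0) i = 0 := by
      intro i
      rw [hArow_apply, hAe]
      have : cf 0 i = 0 := by simp [hcf]
      rw [this]
      simp
    exact PiLp.ext this
  -- range of Mrow lands in Kset
  have hranK : ∀ f, ⟪e (0 : Fin n → ℕ), Mrow f⟫_ℂ = 0 := by
    intro f
    rw [← hadj, hArow_e0, inner_zero_left]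
  -- coercivity identity
  have hSx : ∀ x : H, RCLike.re ⟪Mrow (Arow x), x⟫_ℂ = ‖Arow x‖ ^ 2 := by
    intro x
    have h1 : ⟪x, Mrow (Arow x)⟫_ℂ = ⟪Arow x, Arow x⟫_ℂ := (hadj x (Arow x)).symm
    have h2 : ⟪Mrow (Arow x), x⟫_ℂ = starRingEnd ℂ ⟪x, Mrow (Arow x)⟫_ℂ :=
      (inner_conj_symm _ _).symm
    rw [h2, h1, inner_conj_symm]
    exact inner_self_eq_norm_sq _
  -- estimate on the span V
  set V : Submodule ℂ H :=
    Submodule.span ℂ (Set.range fun α : {α : Fin n → ℕ // α ≠ 0} => e ↑α) with hV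
  have hV_est : ∀ g ∈ V, ‖g‖ ^ 2 ≤ m * ‖Arow g‖ ^ 2 := by
    intro g hg
    rw [hV] at hg
    obtain ⟨c, rfl⟩ := Finsupp.mem_span_range_iff_exists_finsupp.mp hg
    have hgdef : (c.sum fun α a => a • e ↑α) = ∑ α ∈ c.support, c α • e (↑α : Fin n → ℕ) := rfl
    rw [hgdef]
    have hg2 : ‖∑ α ∈ c.support, c α • e (↑α : Fin n → ℕ)‖ ^ 2
        = ∑ α ∈ c.support, ‖c α‖ ^ 2 * (rhoR m (↑α : Fin n → ℕ))⁻¹ := by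
      rw [norm_sq_sum_orthogonal]
      · exact Finset.sum_congr rfl fun α _ => by rw [norm_smul, mul_pow, hnorme]
      · intro x hx y hy hxy
        rw [inner_smul_left, inner_smul_right, horth,
            if_neg (fun h => hxy (Subtype.ext h)), mul_zero, mul_zero]
    have hAg : ∀ i, A i (∑ α ∈ c.support, c α • e (↑α : Fin n → ℕ))
        = ∑ α ∈ c.support, (c α * ((cf ↑α i : ℝ) : ℂ)) • e ((↑α : Fin n → ℕ) - Pi.single i 1) := by
      intro i
      rw [map_sum]
      exact Finset.sum_congr rfl fun α _ => by rw [map_smul, hAe, smul_smul]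
    have hAg2 : ∀ i, ‖A i (∑ α ∈ c.support, c α • e (↑α : Fin n → ℕ))‖ ^ 2
        = ∑ α ∈ c.support, ‖c α‖ ^ 2 *
            ((cf ↑α i) ^ 2 * (rhoR m ((↑α : Fin n → ℕ) - Pi.single i 1))⁻¹) := by
      intro i
      rw [hAg, norm_sq_sum_orthogonal]
      · refine Finset.sum_congr rfl fun α _ => ?_
        rw [norm_smul, mul_pow, hnorme, norm_mul, mul_pow, Complex.norm_real, Real.norm_eq_abs, sq_abs]
        ring
      · intro x hx y hy hxy
        by_cases hx0 : (↑x : Fin n → ℕ) i = 0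
        · have h1 : cf ↑x i = 0 := by simp [hcf, hx0]
          rw [h1]; simp
        by_cases hy0 : (↑y : Fin n → ℕ) i = 0
        · have h1 : cf ↑y i = 0 := by simp [hcf, hy0]
          rw [h1]; simp
        have hne : (↑x : Fin n → ℕ) - Pi.single i 1 ≠ (↑y : Fin n → ℕ) - Pi.single i 1 := by
          intro h
          apply hxy
          apply Subtype.ext
          funext j
          have hj := congrFun h j
          by_cases hji : j = i
          · subst hji
            simp only [Pi.sub_apply, Pi.single_eq_same] at hj
            omega
          · simpa [Pi.sub_apply, Pi.single_eq_of_ne hji] using hj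
        rw [inner_smul_left, inner_smul_right, horth, if_neg hne, mul_zero, mul_zero]
    rw [hArow_norm, hg2]
    have hswap : ∑ i, ‖A i (∑ α ∈ c.support, c α • e (↑α : Fin n → ℕ))‖ ^ 2
        = ∑ α ∈ c.support, ‖c α‖ ^ 2 *
            ∑ i, (cf ↑α i) ^ 2 * (rhoR m ((↑α : Fin n → ℕ) - Pi.single i 1))⁻¹ := by
      rw [Finset.sum_congr rfl fun i _ => hAg2 i, Finset.sum_comm]
      exact Finset.sum_congr rfl fun α _ => by rw [Finset.mul_sum]
    rw [hswap, Finset.mul_sum]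
    apply Finset.sum_le_sum
    intro α hα
    have hS1 : 1 ≤ ∑ j, (↑α : Fin n → ℕ) j := by
      rcases Function.ne_iff.mp α.2 with ⟨j, hj⟩
      calc 1 ≤ (↑α : Fin n → ℕ) j := Nat.one_le_iff_ne_zero.mpr (by simpa using hj)
      _ ≤ _ := Finset.single_le_sum (fun k _ => Nat.zero_le _) (Finset.mem_univ j)
    have hNp : 0 < N ↑α := hNpos ↑α hS1
    have hNne : ((N ↑α : ℕ) : ℝ) ≠ 0 := by exact_mod_cast hNp.ne'
    have hterm : ∀ i, (cf ↑α i) ^ 2 * (rhoR m ((↑α : Fin n → ℕ) - Pi.single i 1))⁻¹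
        = cf ↑α i * (rhoR m (↑α : Fin n → ℕ))⁻¹ := by
      intro i
      by_cases h0 : (↑α : Fin n → ℕ) i = 0
      · simp [hcf, h0]
      · have hi : 1 ≤ (↑α : Fin n → ℕ) i := Nat.one_le_iff_ne_zero.mpr h0
        have hkey : ((N ↑α : ℕ) : ℝ) * rhoR m ((↑α : Fin n → ℕ) - Pi.single i 1)
            = (((↑α : Fin n → ℕ) i : ℕ) : ℝ) * rhoR m (↑α : Fin n → ℕ) :=
          rhoR_key m hm _ i hi
        have hρ : rhoR m (↑α : Fin n → ℕ) ≠ 0 := (rhoR_pos m _).ne'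
        have hρ' : rhoR m ((↑α : Fin n → ℕ) - Pi.single i 1) ≠ 0 := (rhoR_pos m _).ne'
        have hαi : (((↑α : Fin n → ℕ) i : ℕ) : ℝ) ≠ 0 := by exact_mod_cast h0
        rw [hcf]
        field_simp
        linear_combination (-1 : ℝ) * hkey
    rw [Finset.sum_congr rfl fun i _ => hterm i, ← Finset.sum_mul]
    have hsumcf : ∑ i, cf ↑α i = (((∑ j, (↑α : Fin n → ℕ) j : ℕ)) : ℝ) / ((N ↑α : ℕ) : ℝ) := by
      rw [hcf]
      rw [← Finset.sum_div]
      push_cast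
      rfl
    rw [hsumcf]
    have hnumnat : (N ↑α : ℕ) ≤ m * ∑ j, (↑α : Fin n → ℕ) j := by
      show m + (∑ j, (↑α : Fin n → ℕ) j) - 1 ≤ m * ∑ j, (↑α : Fin n → ℕ) j
      obtain ⟨μ, rfl⟩ : ∃ μ, m = μ + 1 := ⟨m - 1, by omega⟩
      obtain ⟨t, ht⟩ : ∃ t, (∑ j, (↑α : Fin n → ℕ) j) = t + 1 := ⟨(∑ j, (↑α : Fin n → ℕ) j) - 1, by omega⟩
      rw [ht]
      calc μ + 1 + (t + 1) - 1 = μ + t + 1 := by omega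
      _ ≤ μ * t + (μ + t + 1) := Nat.le_add_left _ _
      _ = (μ + 1) * (t + 1) := by ring
    have hnum : ((N ↑α : ℕ) : ℝ) ≤ (m : ℝ) * ((∑ j, (↑α : Fin n → ℕ) j : ℕ) : ℝ) := by
      exact_mod_cast hnumnat
    have h1 : 1 ≤ (m : ℝ) * ((((∑ j, (↑α : Fin n → ℕ) j : ℕ)) : ℝ) / ((N ↑α : ℕ) : ℝ)) := by
      rw [mul_div_assoc'] at *
      exact (one_le_div (by exact_mod_cast hNp)).mpr hnum
    have hc2 : (0 : ℝ) ≤ ‖c α‖ ^ 2 * (rhoR m (↑α : Fin n → ℕ))⁻¹ :=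
      mul_nonneg (sq_nonneg _) (inv_nonneg.mpr (rhoR_pos m _).le)
    calc ‖c α‖ ^ 2 * (rhoR m (↑α : Fin n → ℕ))⁻¹
        = 1 * (‖c α‖ ^ 2 * (rhoR m (↑α : Fin n → ℕ))⁻¹) := by ring
      _ ≤ ((m : ℝ) * ((((∑ j, (↑α : Fin n → ℕ) j : ℕ)) : ℝ) / ((N ↑α : ℕ) : ℝ)))
            * (‖c α‖ ^ 2 * (rhoR m (↑α : Fin n → ℕ))⁻¹) := by
          exact mul_le_mul_of_nonneg_right h1 hc2
      _ = (m : ℝ) * (‖c α‖ ^ 2 * ((((∑ j, (↑α : Fin n → ℕ) j : ℕ)) : ℝ) / ((N ↑α : ℕ) : ℝ)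
            * (rhoR m (↑α : Fin n → ℕ))⁻¹)) := by ring
  -- the estimate extends to all of Kset
  have hKest : ∀ f : H, ⟪e (0 : Fin n → ℕ), f⟫_ℂ = 0 → ‖f‖ ^ 2 ≤ m * ‖Arow f‖ ^ 2 := by
    have hCcl : IsClosed {g : H | ‖g‖ ^ 2 ≤ (m : ℝ) * ‖Arow g‖ ^ 2} :=
      isClosed_le (continuous_norm.pow 2)
        (continuous_const.mul ((Arow.continuous.norm).pow 2))
    set P : H →L[ℂ] H :=
      ContinuousLinearMap.id ℂ H - (innerSL ℂ (e 0)).smulRight (e 0) with hPdef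
    have hPapp : ∀ x, P x = x - ⟪e (0 : Fin n → ℕ), x⟫_ℂ • e 0 := fun x => rfl
    have hee : ⟪e (0 : Fin n → ℕ), e 0⟫_ℂ = 1 := by
      rw [horth, if_pos rfl, rhoR_zero]
      norm_num
    have hP0 : P (e 0) = 0 := by rw [hPapp, hee, one_smul, sub_self]
    have hPe : ∀ γ : Fin n → ℕ, γ ≠ 0 → P (e γ) = e γ := by
      intro γ hγ
      rw [hPapp, horth, if_neg (fun h => hγ h.symm), zero_smul, sub_zero]
    have hsub : Submodule.span ℂ (Set.range e) ≤ Submodule.comap (P : H →ₗ[ℂ] H) V := by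
      rw [Submodule.span_le]
      rintro x ⟨γ, rfl⟩
      by_cases hγ : γ = 0
      · subst hγ
        simp only [Set.mem_preimage, SetLike.mem_coe, Submodule.mem_comap,
          ContinuousLinearMap.coe_coe, hP0]
        exact Submodule.zero_mem V
      · simp only [Set.mem_preimage, SetLike.mem_coe, Submodule.mem_comap,
          ContinuousLinearMap.coe_coe, hPe γ hγ]
        exact Submodule.subset_span ⟨⟨γ, hγ⟩, rfl⟩
    intro f hf
    have hPf : P f = f := by rw [hPapp, hf, zero_smul, sub_zero]
    have hfc : f ∈ closure (V : Set H) := by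
      have hfcl : f ∈ closure ((Submodule.span ℂ (Set.range e) : Submodule ℂ H) : Set H) := by
        rw [hdense.closure_eq]; trivial
      have hmap : Set.MapsTo P ((Submodule.span ℂ (Set.range e) : Submodule ℂ H) : Set H)
          (V : Set H) := fun x hx => hsub hx
      have h2 := map_mem_closure P.continuous hfcl hmap
      rwa [hPf] at h2
    exact (closure_minimal (fun g hg => hV_est g hg) hCcl) hfc
  -- now the Hilbert space argument
  have hKcl : IsClosed (((LinearMap.ker ((innerSL ℂ (e (0 : Fin n → ℕ)) : H →ₗ[ℂ] ℂ)) : Submodule ℂ H)) : Set H) :=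
    by exact ContinuousLinearMap.isClosed_ker (innerSL ℂ (e (0 : Fin n → ℕ)))
  set K : Submodule ℂ H := LinearMap.ker ((innerSL ℂ (e (0 : Fin n → ℕ)) : H →ₗ[ℂ] ℂ)) with hK
  have hKmem : ∀ f : H, f ∈ K ↔ ⟪e (0 : Fin n → ℕ), f⟫_ℂ = 0 := by
    intro f
    simp [hK, LinearMap.mem_ker]
  haveI : CompleteSpace K := hKcl.completeSpace_coe
  set S : H →L[ℂ] H := Mrow.comp Arow with hS
  have hSmem : ∀ x, S x ∈ K := fun x => (hKmem _).mpr (hranK (Arow x))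
  set Shat : K →L[ℂ] K :=
    ContinuousLinearMap.codRestrict (S.comp K.subtypeL) K (fun g => hSmem _) with hShat
  have hShatapp : ∀ g : K, (Shat g : H) = S (g : H) := fun g => rfl
  have hcoer : ∀ g : K, ‖(g : H)‖ ^ 2 ≤ m * ‖Arow (g : H)‖ ^ 2 :=
    fun g => hKest _ ((hKmem _).mp g.2)
  have hre : ∀ g : K, RCLike.re ⟪(Shat g : H), (g : H)⟫_ℂ = ‖Arow (g : H)‖ ^ 2 := by
    intro g
    rw [hShatapp]
    exact hSx _
  have hbound : ∀ g : K, ‖g‖ ≤ m * ‖Shat g‖ := by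
    intro g
    by_cases hg0 : ‖g‖ = 0
    · rw [hg0]; positivity
    have hgpos : 0 < ‖g‖ := lt_of_le_of_ne (norm_nonneg _) (Ne.symm hg0)
    have h1 : ‖(g : H)‖ ^ 2 ≤ m * ‖Arow (g : H)‖ ^ 2 := hcoer g
    have h2 : ‖Arow (g : H)‖ ^ 2 = RCLike.re ⟪(Shat g : H), (g : H)⟫_ℂ := (hre g).symm
    have h3 : RCLike.re ⟪(Shat g : H), (g : H)⟫_ℂ ≤ ‖(Shat g : H)‖ * ‖(g : H)‖ :=
      le_trans (RCLike.re_le_norm _) (norm_inner_le_norm _ _)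
    have hng : ‖g‖ = ‖(g : H)‖ := rfl
    have hnS : ‖Shat g‖ = ‖(Shat g : H)‖ := rfl
    have hm0 : (0 : ℝ) ≤ (m : ℝ) := Nat.cast_nonneg m
    have h4 : ‖g‖ * ‖g‖ ≤ ((m : ℝ) * ‖Shat g‖) * ‖g‖ := by
      rw [hng, hnS]
      nlinarith [h1, h2, h3]
    exact le_of_mul_le_mul_right h4 hgpos
  have hanti : AntilipschitzWith (m : NNReal) Shat :=
    ContinuousLinearMap.antilipschitz_of_bound Shat (fun x => by exact_mod_cast hbound x)
  have hclosedrange : IsClosed (Set.range Shat) := hanti.isClosed_range Shat.uniformContinuous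
  have hRcl : IsClosed ((LinearMap.range (Shat : K →ₗ[ℂ] K) : Submodule ℂ K) : Set K) := hclosedrange
  haveI : CompleteSpace (LinearMap.range (Shat : K →ₗ[ℂ] K) : Submodule ℂ K) := hRcl.completeSpace_coe
  have horthbot : (LinearMap.range (Shat : K →ₗ[ℂ] K) : Submodule ℂ K)ᗮ = ⊥ := by
    rw [Submodule.eq_bot_iff]
    intro g hg
    have hg1 : ⟪Shat g, g⟫_ℂ = 0 :=
      (Submodule.mem_orthogonal _ g).mp hg (Shat g) (LinearMap.mem_range_self _ g)
    have hg2 : RCLike.re ⟪(Shat g : H), (g : H)⟫_ℂ = 0 := by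
      rw [← Submodule.coe_inner, hg1]
      simp
    have h1 := hcoer g
    rw [← hre g, hg2, mul_zero] at h1
    have h5 : ‖(g : H)‖ = 0 := by nlinarith [norm_nonneg (g : H)]
    exact Subtype.ext (norm_eq_zero.mp h5)
  have hRtop : (LinearMap.range (Shat : K →ₗ[ℂ] K) : Submodule ℂ K) = ⊤ :=
    Submodule.orthogonal_eq_bot_iff.mp horthbot
  have hsurj : ∀ fK : K, ∃ g : K, Shat g = fK := by
    intro fK
    have h6 : fK ∈ LinearMap.range (Shat : K →ₗ[ℂ] K) := hRtop ▸ Submodule.mem_top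
    exact h6
  have hrange : Set.range Mrow = {f : H | ⟪e (0 : Fin n → ℕ), f⟫_ℂ = 0} := by
    apply Set.Subset.antisymm
    · rintro _ ⟨f, rfl⟩
      exact hranK f
    · intro f hf
      obtain ⟨g, hg⟩ := hsurj ⟨f, (hKmem f).mpr hf⟩
      refine ⟨Arow (g : H), ?_⟩
      have h7 := congrArg (Subtype.val) hg
      rw [hShatapp] at h7
      exact h7
  refine ⟨?_, hrange⟩
  rw [hrange]
  exact isClosed_eq (continuous_const.inner continuous_id) continuous_const
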